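/- Suppose G is connected. Let A ⊊ V be a proper subset of the vertices and let i ∈ A. Then the expected number of visits of the Metropolis–Hastings walk RW(G_1) started at i to the vertex i strictly before the first time the walk reaches a vertex outside A satisfies E_i N_i(T_{V∖A}) < 6|A| + 2Δ, where N_i(T_{V∖A}) = #{τ : 0 ≤ τ < T_{V∖A}, X_τ = i}. -/

import Mathlib

open Finset

/-- The Metropolis–Hastings transition matrix on a graph, with unit potential:
`P v u = min (1/deg v) (1/deg u)` for adjacent `u ≠ v`, `0` for non-adjacent `u ≠ v`,
and `P v v = 1 - ∑_{u ∈ Γ(v)} min (1/deg v) (1/deg u)`. -/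
noncomputable def mhMatrix {V : Type*} [Fintype V] [DecidableEq V] (G : SimpleGraph V)
    [DecidableRel G.Adj] : Matrix V V ℝ :=
  Matrix.of fun v u =>
    if u = v then
      1 - ∑ w ∈ G.neighborFinset v, min ((G.degree v : ℝ))⁻¹ ((G.degree w : ℝ))⁻¹
    else if G.Adj v u then min ((G.degree v : ℝ))⁻¹ ((G.degree u : ℝ))⁻¹
    else 0

/-- Probability, for the Markov chain with transition matrix `P` and initial distribution `μ`,
that the trajectory `(X_0, …, X_L)` lies in the event `E`. -/
noncomputable def prTraj {V : Type*} [Fintype V] (P : Matrix V V ℝ) (μ : V → ℝ) (L : ℕ)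
    (E : Set (Fin (L + 1) → V)) : ℝ :=
  ∑ x : Fin (L + 1) → V,
    E.indicator (fun y => μ (y 0) * ∏ τ : Fin L, P (y τ.castSucc) (y τ.succ)) x

/-- Point mass at `i`, as an initial distribution. -/
def dirac {V : Type*} [DecidableEq V] (i : V) : V → ℝ := fun v => if v = i then 1 else 0
noncomputable def mhQ {V : Type*} [Fintype V] [DecidableEq V] (G : SimpleGraph V)
    [DecidableRel G.Adj] (A : Finset V) : Matrix V V ℝ :=
  Matrix.of fun v u => if v ∈ A ∧ u ∈ A then mhMatrix G v u else 0


lemma pow_entry_nonneg {V : Type*} [Fintype V] [DecidableEq V] (M : Matrix V V ℝ)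
    (h : ∀ v u, 0 ≤ M v u) : ∀ (τ : ℕ) (v u : V), 0 ≤ (M ^ τ) v u := by
  intro τ
  induction τ with
  | zero => intro v u; rw [pow_zero, Matrix.one_apply]; positivity
  | succ τ ih =>
    intro v u
    rw [pow_succ, Matrix.mul_apply]
    exact Finset.sum_nonneg fun x _ => mul_nonneg (ih v x) (h x u)

lemma inv_min_inv_inv {a b : ℕ} (ha : 0 < a) (hb : 0 < b) :
    (min ((a : ℝ))⁻¹ ((b : ℝ))⁻¹)⁻¹ = ((max a b : ℕ) : ℝ) := by
  have ha' : (0:ℝ) < a := by exact_mod_cast ha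
  have hb' : (0:ℝ) < b := by exact_mod_cast hb
  rcases le_total a b with h | h
  · have h' : (a:ℝ) ≤ b := by exact_mod_cast h
    rw [max_eq_right h, min_eq_right (by exact inv_anti₀ ha' h'), inv_inv]
  · have h' : (b:ℝ) ≤ a := by exact_mod_cast h
    rw [max_eq_left h, min_eq_left (by exact inv_anti₀ hb' h'), inv_inv]

lemma pathSum_eq {V : Type*} [Fintype V] [DecidableEq V] (M : Matrix V V ℝ) :
    ∀ (τ : ℕ) (μ : V → ℝ) (b : V),
      (∑ x : Fin (τ + 1) → V, if x (Fin.last τ) = b then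
          μ (x 0) * ∏ s : Fin τ, M (x s.castSucc) (x s.succ) else 0)
        = Matrix.vecMul μ (M ^ τ) b := by
  intro τ
  induction τ with
  | zero =>
    intro μ b
    rw [← (Equiv.funUnique (Fin 1) V).symm.sum_comp]
    simp [Matrix.vecMul_one]
  | succ τ ih =>
    intro μ b
    rw [← (Fin.consEquiv (fun _ : Fin (τ + 2) => V)).sum_comp, Fintype.sum_prod_type]
    have key : ∀ (v : V) (y : Fin (τ + 1) → V),
        (if (Fin.consEquiv (fun _ : Fin (τ+2) => V)) (v, y) (Fin.last (τ+1)) = b then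
          μ ((Fin.consEquiv (fun _ : Fin (τ+2) => V)) (v, y) 0) *
            ∏ s : Fin (τ+1), M ((Fin.consEquiv (fun _ : Fin (τ+2) => V)) (v, y) s.castSucc)
              ((Fin.consEquiv (fun _ : Fin (τ+2) => V)) (v, y) s.succ) else 0)
        = (if y (Fin.last τ) = b then (μ v * M v (y 0)) * ∏ s : Fin τ, M (y s.castSucc) (y s.succ) else 0) := by
      intro v y
      have h1 : (Fin.consEquiv (fun _ : Fin (τ+2) => V)) (v, y) = Fin.cons v y := rfl
      rw [h1]
      have hlast : (Fin.cons v y : Fin (τ+2) → V) (Fin.last (τ+1)) = y (Fin.last τ) := by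
        have : (Fin.last (τ+1)) = (Fin.last τ).succ := rfl
        rw [this, Fin.cons_succ]
      rw [hlast]
      congr 1
      rw [Fin.prod_univ_succ]
      simp only [Fin.cons_zero, Fin.castSucc_zero, ← Fin.succ_castSucc, Fin.cons_succ]
      ring
    simp_rw [key]
    have : ∀ y : Fin (τ+1) → V,
        ∑ v : V, (if y (Fin.last τ) = b then (μ v * M v (y 0)) * ∏ s : Fin τ, M (y s.castSucc) (y s.succ) else 0)
        = (if y (Fin.last τ) = b then (Matrix.vecMul μ M) (y 0) * ∏ s : Fin τ, M (y s.castSucc) (y s.succ) else 0) := by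
      intro y
      by_cases h : y (Fin.last τ) = b
      · simp only [h, if_true, Matrix.vecMul, dotProduct, Finset.sum_mul]
      · simp [h]
    rw [Finset.sum_comm]
    simp_rw [this, ih (Matrix.vecMul μ M) b, Matrix.vecMul_vecMul, ← pow_succ']

lemma prTraj_eq_pow {V : Type*} [Fintype V] [DecidableEq V] (G : SimpleGraph V)
    [DecidableRel G.Adj] (A : Finset V) (i : V) (hi : i ∈ A) (τ : ℕ) :
    prTraj (mhMatrix G) (dirac i) τ
        {x | x (Fin.last τ) = i ∧ ∀ s : Fin (τ + 1), 1 ≤ s.val → x s ∈ A}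
      = ((mhQ G A) ^ τ) i i := by
  have hrw : ∀ x : Fin (τ+1) → V,
      Set.indicator {x : Fin (τ+1) → V | x (Fin.last τ) = i ∧ ∀ s : Fin (τ + 1), 1 ≤ s.val → x s ∈ A}
        (fun y => dirac i (y 0) * ∏ s : Fin τ, mhMatrix G (y s.castSucc) (y s.succ)) x
      = (if x (Fin.last τ) = i then dirac i (x 0) * ∏ s : Fin τ, mhQ G A (x s.castSucc) (x s.succ) else 0) := by
    intro x
    by_cases hmem : x ∈ {x : Fin (τ+1) → V | x (Fin.last τ) = i ∧ ∀ s : Fin (τ + 1), 1 ≤ s.val → x s ∈ A}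
    · have hmem2 := hmem
      rw [Set.mem_setOf_eq] at hmem2
      obtain ⟨hlast, hA⟩ := hmem2
      rw [Set.indicator_of_mem hmem, if_pos hlast]
      by_cases h0 : x 0 = i
      · congr 1
        apply Finset.prod_congr rfl
        intro s _
        have h1 : x s.castSucc ∈ A := by
          rcases Nat.eq_zero_or_pos s.castSucc.val with h | h
          · have hz : s.castSucc = 0 := by ext; simpa using h
            rw [hz, h0]; exact hi
          · exact hA _ h
        have h2 : x s.succ ∈ A := hA _ (by simp [Fin.val_succ])
        simp [mhQ, h1, h2]
      · simp [dirac, h0]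
    · rw [Set.indicator_of_notMem hmem]
      rw [Set.mem_setOf_eq] at hmem
      push_neg at hmem
      by_cases hlast : x (Fin.last τ) = i
      · obtain ⟨s, hs1, hsA⟩ := hmem hlast
        rw [if_pos hlast]
        have hlt := s.isLt
        have hτ : s.val - 1 < τ := by omega
        have ht : (⟨s.val - 1, hτ⟩ : Fin τ).succ = s := by
          ext; simp [Fin.val_succ]; omega
        have hz : mhQ G A (x (⟨s.val - 1, hτ⟩ : Fin τ).castSucc) (x (⟨s.val - 1, hτ⟩ : Fin τ).succ) = 0 := by
          rw [ht]; simp [mhQ, hsA]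
        rw [Finset.prod_eq_zero (f := fun s : Fin τ => mhQ G A (x s.castSucc) (x s.succ))
          (Finset.mem_univ _) hz, mul_zero]
      · rw [if_neg hlast]
  rw [prTraj]
  simp_rw [hrw]
  rw [pathSum_eq]
  simp [Matrix.vecMul, dotProduct, dirac, ite_mul]

lemma partial_sum_bound {V : Type*} [Fintype V] [DecidableEq V]
    (C P Q : Matrix V V ℝ) (A : Finset V) (i : V) (hi : i ∈ A)
    (hCsymm : ∀ v u, C v u = C u v) (hCnn : ∀ v u, 0 ≤ C v u) (hCdiag : ∀ v, C v v = 0)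
    (hPoff : ∀ v u, v ≠ u → P v u = C v u) (hPdiag : ∀ v, P v v = 1 - ∑ u, C v u)
    (hQ : ∀ v u, Q v u = if v ∈ A ∧ u ∈ A then P v u else 0)
    (hQnn : ∀ v u, 0 ≤ Q v u)
    (k : ℕ) (p : ℕ → V)
    (hp0 : p 0 = i) (hpk : p k ∉ A)
    (hinj : ∀ j j', j ≤ k → j' ≤ k → p j = p j' → j = j')
    (hCpos : ∀ j, j < k → 0 < C (p j) (p (j+1)))
    (T : ℕ) :
    ∑ τ ∈ Finset.range T, (Q ^ τ) i i
      ≤ ∑ j ∈ Finset.range k, (C (p j) (p (j+1)))⁻¹ := by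
  set R : ℝ := ∑ j ∈ Finset.range k, (C (p j) (p (j+1)))⁻¹ with hR
  have hRnn : 0 ≤ R := Finset.sum_nonneg fun j hj =>
    (inv_nonneg).2 (hCpos j (Finset.mem_range.1 hj)).le
  set w : V → ℝ := fun v => ∑ τ ∈ Finset.range T, (Q ^ τ) v i with hw
  -- nonnegativity of powers
  have hQpow_nn : ∀ (τ : ℕ) (v u : V), 0 ≤ (Q ^ τ) v u := by
    intro τ
    induction τ with
    | zero => intro v u; rw [pow_zero, Matrix.one_apply]; positivity
    | succ τ ih =>
      intro v u
      rw [pow_succ, Matrix.mul_apply]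
      exact Finset.sum_nonneg fun x _ => mul_nonneg (ih v x) (hQnn x u)
  have hw_nn : ∀ v, 0 ≤ w v := fun v =>
    Finset.sum_nonneg fun τ _ => hQpow_nn τ v i
  have hsupp : ∀ v, v ∉ A → w v = 0 := by
    intro v hv
    apply Finset.sum_eq_zero
    intro τ _
    cases τ with
    | zero =>
      rw [pow_zero, Matrix.one_apply, if_neg]
      rintro rfl; exact hv hi
    | succ τ =>
      rw [pow_succ', Matrix.mul_apply]
      apply Finset.sum_eq_zero
      intro u _
      rw [hQ, if_neg (by tauto), zero_mul]
  -- telescoping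
  have htel : ∀ v, ∑ u, Q v u * w u
      = w v + (Q ^ T) v i - (if v = i then 1 else 0) := by
    intro v
    have h1 : ∀ u, Q v u * w u = ∑ τ ∈ Finset.range T, Q v u * (Q ^ τ) u i := by
      intro u; rw [hw]; exact Finset.mul_sum _ _ _
    simp_rw [h1]
    rw [Finset.sum_comm]
    have h2 : ∀ τ, ∑ u, Q v u * (Q ^ τ) u i = (Q ^ (τ + 1)) v i := by
      intro τ; rw [pow_succ', Matrix.mul_apply]
    simp_rw [h2]
    have h3 : ∑ τ ∈ Finset.range T, (Q ^ (τ+1)) v i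
        = (∑ τ ∈ Finset.range T, (Q ^ τ) v i) + (Q ^ T) v i - (Q ^ 0) v i := by
      have := Finset.sum_range_succ' (fun τ => (Q ^ τ) v i) T
      have h4 := Finset.sum_range_succ (fun τ => (Q ^ τ) v i) T
      rw [h4] at this
      linarith [this]
    rw [h3, pow_zero, Matrix.one_apply]
  -- key inequality
  have hkey1 : ∑ v, w v * (w v - ∑ u, Q v u * w u) ≤ w i := by
    have : ∀ v, w v * (w v - ∑ u, Q v u * w u)
        = w v * (if v = i then 1 else 0) - w v * ((Q ^ T) v i) := by
      intro v; rw [htel v]; ring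
    simp_rw [this]
    rw [Finset.sum_sub_distrib]
    have h5 : ∑ v, w v * (if v = i then 1 else 0) = w i := by
      simp [mul_ite]
    rw [h5]
    have h6 : 0 ≤ ∑ v, w v * ((Q ^ T) v i) :=
      Finset.sum_nonneg fun v _ => mul_nonneg (hw_nn v) (hQpow_nn T v i)
    linarith
  -- Dirichlet identity
  have hQP : ∑ v, w v * (w v - ∑ u, Q v u * w u)
      = ∑ v, w v * (w v - ∑ u, P v u * w u) := by
    apply Finset.sum_congr rfl
    intro v _
    by_cases hv : v ∈ A
    · congr 2
      apply Finset.sum_congr rfl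
      intro u _
      by_cases hu : u ∈ A
      · rw [hQ, if_pos ⟨hv, hu⟩]
      · rw [hsupp u hu, mul_zero, mul_zero]
    · rw [hsupp v hv, zero_mul, zero_mul]
  have hquad : ∑ v, w v * (w v - ∑ u, P v u * w u)
      = (1/2) * ∑ v, ∑ u, C v u * (w v - w u)^2 := by
    have hPv : ∀ v, ∑ u, P v u * w u
        = w v - (∑ u, C v u) * w v + ∑ u, C v u * w u := by
      intro v
      have : ∀ u, P v u * w u
          = C v u * w u + (if u = v then (1 - ∑ z, C v z) * w v - C v v * w v else 0) := by
        intro u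
        by_cases huv : u = v
        · subst huv; rw [if_pos rfl, hPdiag, hCdiag]; ring
        · rw [hPoff v u (Ne.symm huv), if_neg huv]; ring
      simp_rw [this]
      rw [Finset.sum_add_distrib, Finset.sum_ite_eq' Finset.univ v
        (fun u => (1 - ∑ z, C v z) * w v - C v v * w v), if_pos (Finset.mem_univ v), hCdiag]
      ring
    have hLHS : ∑ v, w v * (w v - ∑ u, P v u * w u)
        = ∑ v, ((∑ u, C v u * (w v)^2) - (∑ u, C v u * (w v * w u))) := by
      apply Finset.sum_congr rfl
      intro v _
      have h1 : w v * (w v - (w v - (∑ u, C v u) * w v + ∑ u, C v u * w u))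
          = (∑ u, C v u) * (w v)^2 - w v * ∑ u, C v u * w u := by ring
      rw [hPv v, h1, Finset.sum_mul, Finset.mul_sum]
      congr 1
      apply Finset.sum_congr rfl
      intro u _
      ring
    have hswap : ∑ v, ∑ u, C v u * (w u)^2 = ∑ v, ∑ u, C v u * (w v)^2 := by
      rw [Finset.sum_comm]
      apply Finset.sum_congr rfl
      intro u _
      apply Finset.sum_congr rfl
      intro v _
      rw [hCsymm]
    have hexp : ∑ v, ∑ u, C v u * (w v - w u)^2
        = ∑ v, ((∑ u, C v u * (w v)^2) - (∑ u, 2 * (C v u * (w v * w u))) + (∑ u, C v u * (w u)^2)) := by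
      apply Finset.sum_congr rfl
      intro v _
      rw [← Finset.sum_sub_distrib, ← Finset.sum_add_distrib]
      apply Finset.sum_congr rfl
      intro u _
      ring
    rw [hLHS, hexp]
    rw [Finset.sum_sub_distrib]
    rw [Finset.sum_add_distrib, Finset.sum_sub_distrib, hswap]
    have h2 : ∑ v, ∑ u, 2 * (C v u * (w v * w u)) = 2 * ∑ v, ∑ u, C v u * (w v * w u) := by
      rw [Finset.mul_sum]
      apply Finset.sum_congr rfl
      intro v _
      rw [Finset.mul_sum]
    rw [h2]
    ring
  -- path lower bound
  set D := ∑ j ∈ Finset.range k, C (p j) (p (j+1)) * (w (p j) - w (p (j+1)))^2 with hD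
  have hDnn : 0 ≤ D := Finset.sum_nonneg fun j _ => mul_nonneg (hCnn _ _) (sq_nonneg _)
  have hDle : 2 * D ≤ ∑ v, ∑ u, C v u * (w v - w u)^2 := by
    have hsum : ∑ v, ∑ u, C v u * (w v - w u)^2
        = ∑ q ∈ Finset.univ ×ˢ Finset.univ, C q.1 q.2 * (w q.1 - w q.2)^2 := by
      rw [Finset.sum_product]
    set T1 := (Finset.range k).image (fun j => (p j, p (j+1))) with hT1
    set T2 := (Finset.range k).image (fun j => (p (j+1), p j)) with hT2
    have hle : ∀ j, j ∈ Finset.range k → j ≤ k := fun j hj => (Finset.mem_range.1 hj).le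
    have hle1 : ∀ j, j ∈ Finset.range k → j + 1 ≤ k := fun j hj => (Finset.mem_range.1 hj)
    have hinj1 : ∀ a ∈ Finset.range k, ∀ b ∈ Finset.range k,
        (p a, p (a+1)) = (p b, p (b+1)) → a = b := by
      intro a ha b hb hab
      rw [Prod.mk.injEq] at hab
      exact hinj a b (hle a ha) (hle b hb) hab.1
    have hinj2 : ∀ a ∈ Finset.range k, ∀ b ∈ Finset.range k,
        (p (a+1), p a) = (p (b+1), p b) → a = b := by
      intro a ha b hb hab
      rw [Prod.mk.injEq] at hab
      exact hinj a b (hle a ha) (hle b hb) hab.2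
    have hdisj : Disjoint T1 T2 := by
      rw [Finset.disjoint_left]
      intro q hq1 hq2
      rw [hT1, Finset.mem_image] at hq1
      rw [hT2, Finset.mem_image] at hq2
      obtain ⟨a, ha, rfl⟩ := hq1
      obtain ⟨b, hb, hab⟩ := hq2
      rw [Prod.mk.injEq] at hab
      have e1 := hinj (b+1) a (hle1 b hb) (hle a ha) hab.1
      have e2 := hinj b (a+1) (hle b hb) (hle1 a ha) hab.2
      omega
    have hsub : T1 ∪ T2 ⊆ Finset.univ ×ˢ Finset.univ := by
      intro q _
      simp [Finset.mem_product]
    have hmono : ∑ q ∈ T1 ∪ T2, C q.1 q.2 * (w q.1 - w q.2)^2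
        ≤ ∑ q ∈ Finset.univ ×ˢ Finset.univ, C q.1 q.2 * (w q.1 - w q.2)^2 :=
      Finset.sum_le_sum_of_subset_of_nonneg hsub
        (fun q _ _ => mul_nonneg (hCnn _ _) (sq_nonneg _))
    have hs1 : ∑ q ∈ T1, C q.1 q.2 * (w q.1 - w q.2)^2 = D := by
      rw [hT1, Finset.sum_image hinj1]
    have hs2 : ∑ q ∈ T2, C q.1 q.2 * (w q.1 - w q.2)^2 = D := by
      rw [hT2, Finset.sum_image hinj2, hD]
      apply Finset.sum_congr rfl
      intro j _
      rw [hCsymm]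
      ring
    rw [Finset.sum_union hdisj, hs1, hs2] at hmono
    rw [hsum]
    linarith
  -- Cauchy-Schwarz
  have htele : w i = ∑ j ∈ Finset.range k, (w (p j) - w (p (j+1))) := by
    rw [Finset.sum_range_sub' (fun j => w (p j)) k, hp0, hsupp (p k) hpk, sub_zero]
  have hCS : (w i)^2 ≤ R * D := by
    have hcs := Finset.sum_mul_sq_le_sq_mul_sq (Finset.range k)
      (fun j => Real.sqrt ((C (p j) (p (j+1)))⁻¹))
      (fun j => Real.sqrt (C (p j) (p (j+1))) * (w (p j) - w (p (j+1))))
    have e1 : ∑ j ∈ Finset.range k, Real.sqrt ((C (p j) (p (j+1)))⁻¹)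
        * (Real.sqrt (C (p j) (p (j+1))) * (w (p j) - w (p (j+1))))
        = ∑ j ∈ Finset.range k, (w (p j) - w (p (j+1))) := by
      apply Finset.sum_congr rfl
      intro j hj
      have hc := hCpos j (Finset.mem_range.1 hj)
      rw [← mul_assoc, ← Real.sqrt_mul (by positivity), inv_mul_cancel₀ (ne_of_gt hc),
        Real.sqrt_one, one_mul]
    have e2 : ∑ j ∈ Finset.range k, (Real.sqrt ((C (p j) (p (j+1)))⁻¹))^2 = R := by
      apply Finset.sum_congr rfl
      intro j hj
      have hc := hCpos j (Finset.mem_range.1 hj)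
      rw [Real.sq_sqrt (by positivity)]
    have e3 : ∑ j ∈ Finset.range k, (Real.sqrt (C (p j) (p (j+1))) * (w (p j) - w (p (j+1))))^2 = D := by
      apply Finset.sum_congr rfl
      intro j hj
      have hc := hCpos j (Finset.mem_range.1 hj)
      rw [mul_pow, Real.sq_sqrt hc.le]
    rw [e1, e2, e3] at hcs
    rw [htele]
    exact hcs
  -- conclude
  have hwi : ∑ τ ∈ Finset.range T, (Q ^ τ) i i = w i := rfl
  rw [hwi]
  have hDwi : D ≤ w i := by linarith [hkey1, hQP, hquad, hDle]
  nlinarith [hCS, hDwi, hRnn, hw_nn i, hDnn]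

lemma adj_dist_le_one {V : Type*} {G : SimpleGraph V} {x y : V} (h : G.Adj x y) :
    G.dist x y ≤ 1 := by
  have := SimpleGraph.dist_le (SimpleGraph.Walk.cons h SimpleGraph.Walk.nil)
  simpa using this

lemma exists_good_path {V : Type*} [Fintype V] [DecidableEq V] (G : SimpleGraph V)
    [DecidableRel G.Adj] (hG : G.Connected)
    (A : Finset V) (hA : A ⊂ Finset.univ) (i : V) (hi : i ∈ A) :
    ∃ (k : ℕ) (p : ℕ → V),
      1 ≤ k ∧ p 0 = i ∧ p k ∉ A ∧
      (∀ j j', j ≤ k → j' ≤ k → p j = p j' → j = j') ∧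
      (∀ j, j < k → G.Adj (p j) (p (j+1))) ∧
      (∑ j ∈ Finset.range k, max (G.degree (p j)) (G.degree (p (j+1)))) + 1
        ≤ 6 * A.card + 2 * G.maxDegree := by
  -- a vertex outside A at minimal distance
  obtain ⟨b0, _, hb0⟩ := Finset.exists_of_ssubset hA
  have hBne : (Finset.univ.filter (fun v => v ∉ A)).Nonempty :=
    ⟨b0, by simp [hb0]⟩
  obtain ⟨b, hbmem, hbmin'⟩ := Finset.exists_min_image _ (G.dist i) hBne
  have hbA : b ∉ A := by simpa using hbmem
  have hbmin : ∀ v, v ∉ A → G.dist i b ≤ G.dist i v := by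
    intro v hv; exact hbmin' v (by simp [hv])
  obtain ⟨W, hW⟩ := hG.exists_walk_length_eq_dist i b
  set k := G.dist i b with hk
  set p : ℕ → V := fun j => W.getVert j with hp
  have hp0 : p 0 = i := W.getVert_zero
  have hpk : p k = b := by rw [hp, ← hW]; exact W.getVert_length
  have hk1 : 1 ≤ k := by
    by_contra h
    have hk0 : k = 0 := by omega
    have : W.length = 0 := by rw [hW]; omega
    have := SimpleGraph.Walk.eq_of_length_eq_zero this
    exact hbA (this ▸ hi)
  have hadj : ∀ j, j < k → G.Adj (p j) (p (j+1)) := by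
    intro j hj
    exact W.adj_getVert_succ (by rw [hW]; exact hj)
  -- distances along the walk
  have hup : ∀ j, j ≤ k → G.dist i (p j) ≤ j := by
    intro j
    induction j with
    | zero => intro _; rw [hp0]; simp
    | succ j ih =>
      intro hj
      have h1 := ih (by omega)
      calc G.dist i (p (j+1)) ≤ G.dist i (p j) + G.dist (p j) (p (j+1)) :=
            hG.dist_triangle
        _ ≤ j + 1 := by
            have := adj_dist_le_one (hadj j (by omega))
            omega
  have hdown : ∀ m j, j + m = k → G.dist (p j) b ≤ m := by
    intro m
    induction m with
    | zero =>
      intro j hj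
      have hjk : j = k := by omega
      rw [hjk, hpk]; simp
    | succ m ih =>
      intro j hj
      calc G.dist (p j) b ≤ G.dist (p j) (p (j+1)) + G.dist (p (j+1)) b :=
            hG.dist_triangle
        _ ≤ m + 1 := by
            have h1 := adj_dist_le_one (hadj j (by omega))
            have h2 := ih (j+1) (by omega)
            omega
  have hdist : ∀ j, j ≤ k → G.dist i (p j) = j := by
    intro j hj
    have h1 := hup j hj
    have h2 := hdown (k - j) j (by omega)
    have h3 : G.dist i b ≤ G.dist i (p j) + G.dist (p j) b := hG.dist_triangle
    omega
  have hinj : ∀ j j', j ≤ k → j' ≤ k → p j = p j' → j = j' := by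
    intro j j' hj hj' he
    rw [← hdist j hj, ← hdist j' hj', he]
  have hpinA : ∀ j, j < k → p j ∈ A := by
    intro j hj
    by_contra h
    have := hbmin (p j) h
    rw [hdist j (by omega)] at this
    omega
  -- degree sum bound
  have hdegsum : ∑ j ∈ Finset.range k, G.degree (p j)
      ≤ 3 * A.card + G.degree (p (k-1)) := by
    have h1 : ∀ j, G.degree (p j) = ∑ u : V, (if G.Adj (p j) u then 1 else 0) := by
      intro j
      rw [← SimpleGraph.card_neighborFinset_eq_degree]
      rw [Finset.card_eq_sum_ones]
      rw [SimpleGraph.neighborFinset_eq_filter, Finset.sum_filter]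
    have h2 : ∑ j ∈ Finset.range k, G.degree (p j)
        = ∑ u : V, ((Finset.range k).filter (fun j => G.Adj (p j) u)).card := by
      simp_rw [h1]
      rw [Finset.sum_comm]
      apply Finset.sum_congr rfl
      intro u _
      rw [Finset.card_filter]
    have hA3 : ∀ u ∈ A, ((Finset.range k).filter (fun j => G.Adj (p j) u)).card ≤ 3 := by
      intro u hu
      set Jf := (Finset.range k).filter (fun j => G.Adj (p j) u) with hJf
      rcases Jf.eq_empty_or_nonempty with hJ | hJ
      · simp [hJ]
      · set a := Jf.min' hJ with ha
        have haJ : a ∈ Jf := Finset.min'_mem _ hJ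
        have hak : a < k := Finset.mem_range.1 (Finset.mem_filter.1 haJ).1
        have haadj : G.Adj (p a) u := (Finset.mem_filter.1 haJ).2
        have hdu : G.dist i u ≤ a + 1 := by
          have ht : G.dist i u ≤ G.dist i (p a) + G.dist (p a) u := hG.dist_triangle
          have h4 := adj_dist_le_one haadj
          have h5 := hdist a (by omega)
          omega
        have hsub : Jf ⊆ Finset.Icc a (a+2) := by
          intro j hj
          have hjk : j < k := Finset.mem_range.1 (Finset.mem_filter.1 hj).1
          have hjadj : G.Adj (p j) u := (Finset.mem_filter.1 hj).2
          have hlow : a ≤ j := Finset.min'_le _ _ hj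
          have ht : G.dist i (p j) ≤ G.dist i u + G.dist u (p j) := hG.dist_triangle
          have h4 := adj_dist_le_one hjadj.symm
          have h5 := hdist j (by omega)
          rw [Finset.mem_Icc]
          omega
        calc Jf.card ≤ (Finset.Icc a (a+2)).card := Finset.card_le_card hsub
          _ = 3 := by rw [Nat.card_Icc]; omega
    have hB1 : ∀ u, u ∉ A → ((Finset.range k).filter (fun j => G.Adj (p j) u)).card
        ≤ (if G.Adj (p (k-1)) u then 1 else 0) := by
      intro u hu
      have hsub : ((Finset.range k).filter (fun j => G.Adj (p j) u)) ⊆ {k-1} := by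
        intro j hj
        have hjk : j < k := Finset.mem_range.1 (Finset.mem_filter.1 hj).1
        have hjadj := (Finset.mem_filter.1 hj).2
        have ht : G.dist i u ≤ G.dist i (p j) + G.dist (p j) u := hG.dist_triangle
        have h4 := adj_dist_le_one hjadj
        have h5 := hdist j (by omega)
        have h6 := hbmin u hu
        rw [Finset.mem_singleton]
        omega
      rcases Finset.eq_empty_or_nonempty ((Finset.range k).filter (fun j => G.Adj (p j) u)) with h | h
      · simp [h]
      · have hmem : k - 1 ∈ (Finset.range k).filter (fun j => G.Adj (p j) u) := by
          obtain ⟨j, hj⟩ := h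
          have hj1 := hsub hj
          rw [Finset.mem_singleton] at hj1
          rwa [← hj1]
        have hadj' := (Finset.mem_filter.1 hmem).2
        rw [if_pos hadj']
        calc ((Finset.range k).filter (fun j => G.Adj (p j) u)).card
            ≤ ({k-1} : Finset ℕ).card := Finset.card_le_card hsub
          _ = 1 := rfl
    rw [h2, ← Finset.sum_filter_add_sum_filter_not Finset.univ (fun u => u ∈ A)]
    have e1 : Finset.univ.filter (fun u => u ∈ A) = A := by ext u; simp
    have hbound1 : ∑ u ∈ Finset.univ.filter (fun u => u ∈ A),
        ((Finset.range k).filter (fun j => G.Adj (p j) u)).card ≤ 3 * A.card := by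
      rw [e1]
      calc ∑ u ∈ A, ((Finset.range k).filter (fun j => G.Adj (p j) u)).card
          ≤ ∑ u ∈ A, 3 := Finset.sum_le_sum hA3
        _ = 3 * A.card := by rw [Finset.sum_const, smul_eq_mul, mul_comm]
    have hbound2 : ∑ u ∈ Finset.univ.filter (fun u => ¬ u ∈ A),
        ((Finset.range k).filter (fun j => G.Adj (p j) u)).card ≤ G.degree (p (k-1)) := by
      calc ∑ u ∈ Finset.univ.filter (fun u => ¬ u ∈ A),
            ((Finset.range k).filter (fun j => G.Adj (p j) u)).card
          ≤ ∑ u ∈ Finset.univ.filter (fun u => ¬ u ∈ A),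
            (if G.Adj (p (k-1)) u then 1 else 0) := by
            apply Finset.sum_le_sum
            intro u hu
            exact hB1 u (by simpa using (Finset.mem_filter.1 hu).2)
        _ ≤ ∑ u : V, (if G.Adj (p (k-1)) u then 1 else 0) := by
            apply Finset.sum_le_sum_of_subset_of_nonneg (Finset.filter_subset _ _)
            intro u _ _
            positivity
        _ = G.degree (p (k-1)) := (h1 (k-1)).symm
    omega
  -- final bound
  refine ⟨k, p, hk1, hp0, hpk ▸ hbA, hinj, hadj, ?_⟩
  obtain ⟨k', hkk⟩ : ∃ k', k = k' + 1 := ⟨k - 1, by omega⟩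
  rw [hkk, Finset.sum_range_succ]
  have hR2 : ∑ j ∈ Finset.range k', max (G.degree (p j)) (G.degree (p (j+1)))
      ≤ (∑ j ∈ Finset.range k', G.degree (p j)) + ∑ j ∈ Finset.range k', G.degree (p (j+1)) := by
    rw [← Finset.sum_add_distrib]
    exact Finset.sum_le_sum fun j _ => max_le (Nat.le_add_right _ _) (Nat.le_add_left _ _)
  have e1 : (∑ j ∈ Finset.range k', G.degree (p j)) + G.degree (p k')
      = ∑ j ∈ Finset.range k, G.degree (p j) := by
    rw [hkk, Finset.sum_range_succ]
  have e2 : (∑ j ∈ Finset.range k', G.degree (p (j+1))) + G.degree (p 0)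
      = ∑ j ∈ Finset.range k, G.degree (p j) := by
    rw [hkk, Finset.sum_range_succ' (fun j => G.degree (p j)) k']
  have hmaxlast : max (G.degree (p k')) (G.degree (p (k'+1))) ≤ G.maxDegree :=
    max_le (G.degree_le_maxDegree _) (G.degree_le_maxDegree _)
  have hd0 : 1 ≤ G.degree (p 0) := by
    have hadj0 := hadj 0 (by omega)
    have : 0 < G.degree (p 0) := by
      rw [G.degree_pos_iff_exists_adj]
      exact ⟨p 1, hadj0⟩
    omega
  have hS2 := hdegsum
  rw [show k - 1 = k' from by omega] at hS2
  omega

/-- For a connected graph `G`, a proper subset `A ⊊ V` and `i ∈ A`, the expected number of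
visits of the Metropolis–Hastings walk started at `i` to `i` strictly before the first
hitting time of `V ∖ A` is less than `6|A| + 2Δ`.  The expectation
`E_i N_i(T_{V∖A})` is written as `∑' τ, Pr_i[X_τ = i ∧ τ < T_{V∖A}]`, where `τ < T_{V∖A}`
is the event that the walk stays in `A` at all times `1,…,τ`. -/
theorem mh_returns_before_escape {V : Type*} [Fintype V] [DecidableEq V] (G : SimpleGraph V)
    [DecidableRel G.Adj] (hG : G.Connected)
    (A : Finset V) (hA : A ⊂ Finset.univ) (i : V) (hi : i ∈ A) :
    (∑' τ : ℕ, ENNReal.ofReal (prTraj (mhMatrix G) (dirac i) τ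
        {x | x (Fin.last τ) = i ∧ ∀ s : Fin (τ + 1), 1 ≤ s.val → x s ∈ A})) <
      ENNReal.ofReal (6 * (A.card : ℝ) + 2 * (G.maxDegree : ℝ)) := by
  classical
  -- nontriviality and positive degrees
  obtain ⟨b0, _, hb0⟩ := Finset.exists_of_ssubset hA
  have hdegpos : ∀ v : V, 0 < G.degree v := by
    intro v
    rw [G.degree_pos_iff_exists_adj]
    have hex : ∃ u : V, u ≠ v := by
      by_cases h : v = i
      · exact ⟨b0, by rintro rfl; exact hb0 (h ▸ hi)⟩
      · exact ⟨i, fun e => h e.symm⟩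
    obtain ⟨u, hu⟩ := hex
    obtain ⟨Wv⟩ := hG.preconnected v u
    have hlen : 0 < Wv.length := by
      rcases Nat.eq_zero_or_pos Wv.length with h | h
      · exact absurd (SimpleGraph.Walk.eq_of_length_eq_zero h).symm hu
      · exact h
    have := Wv.adj_getVert_succ hlen
    rw [SimpleGraph.Walk.getVert_zero] at this
    exact ⟨Wv.getVert 1, this⟩
  -- the conductance matrix
  set C : Matrix V V ℝ := Matrix.of fun v u =>
    if G.Adj v u then min ((G.degree v : ℝ))⁻¹ ((G.degree u : ℝ))⁻¹ else 0 with hC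
  have hCapp : ∀ v u, C v u
      = if G.Adj v u then min ((G.degree v : ℝ))⁻¹ ((G.degree u : ℝ))⁻¹ else 0 :=
    fun v u => rfl
  have hCsymm : ∀ v u, C v u = C u v := by
    intro v u
    rw [hCapp, hCapp]
    by_cases h : G.Adj v u
    · rw [if_pos h, if_pos h.symm, min_comm]
    · rw [if_neg h, if_neg fun h' => h h'.symm]
  have hCnn : ∀ v u, 0 ≤ C v u := by
    intro v u
    rw [hCapp]
    by_cases h : G.Adj v u
    · rw [if_pos h]; apply le_min <;> positivity
    · rw [if_neg h]
  have hCdiag : ∀ v, C v v = 0 := by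
    intro v; rw [hCapp, if_neg (G.irrefl)]
  have hPoff : ∀ v u, v ≠ u → mhMatrix G v u = C v u := by
    intro v u h
    rw [hCapp]
    show (if u = v then _ else if G.Adj v u then _ else 0) = _
    rw [if_neg (Ne.symm h)]
  have hCsum : ∀ v, ∑ u, C v u
      = ∑ w ∈ G.neighborFinset v, min ((G.degree v : ℝ))⁻¹ ((G.degree w : ℝ))⁻¹ := by
    intro v
    rw [SimpleGraph.neighborFinset_eq_filter, Finset.sum_filter]
    exact Finset.sum_congr rfl fun u _ => hCapp v u
  have hPdiag : ∀ v, mhMatrix G v v = 1 - ∑ u, C v u := by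
    intro v
    rw [hCsum]
    show (if v = v then _ else _) = _
    rw [if_pos rfl]
  have hPnn : ∀ v u, 0 ≤ mhMatrix G v u := by
    intro v u
    by_cases h : u = v
    · subst h
      rw [hPdiag]
      have hle : ∑ z, C u z ≤ 1 := by
        rw [hCsum]
        have h1 : ∀ w ∈ G.neighborFinset u,
            min ((G.degree u : ℝ))⁻¹ ((G.degree w : ℝ))⁻¹ ≤ ((G.degree u : ℝ))⁻¹ :=
          fun w _ => min_le_left _ _
        calc ∑ w ∈ G.neighborFinset u, min ((G.degree u : ℝ))⁻¹ ((G.degree w : ℝ))⁻¹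
            ≤ ∑ _w ∈ G.neighborFinset u, ((G.degree u : ℝ))⁻¹ := Finset.sum_le_sum h1
          _ = (G.degree u : ℝ) * ((G.degree u : ℝ))⁻¹ := by
              rw [Finset.sum_const, nsmul_eq_mul, G.card_neighborFinset_eq_degree]
          _ = 1 := by
              rw [mul_inv_cancel₀]
              have := hdegpos u
              positivity
      linarith
    · rw [hPoff v u fun e => h e.symm]
      exact hCnn v u
  have hQdef : ∀ v u, mhQ G A v u = if v ∈ A ∧ u ∈ A then mhMatrix G v u else 0 :=
    fun v u => rfl
  have hQnn : ∀ v u, 0 ≤ mhQ G A v u := by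
    intro v u
    rw [hQdef]
    by_cases h : v ∈ A ∧ u ∈ A
    · rw [if_pos h]; exact hPnn v u
    · rw [if_neg h]
  -- the geodesic escape path
  obtain ⟨k, p, hk1, hp0, hpk, hinj, hadjp, hbound⟩ := exists_good_path G hG A hA i hi
  have hCpos : ∀ j, j < k → 0 < C (p j) (p (j+1)) := by
    intro j hj
    rw [hCapp, if_pos (hadjp j hj)]
    have h1 := hdegpos (p j)
    have h2 := hdegpos (p (j+1))
    apply lt_min <;> positivity
  set Rn : ℕ := ∑ j ∈ Finset.range k, max (G.degree (p j)) (G.degree (p (j+1))) with hRn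
  have hRval : ∑ j ∈ Finset.range k, (C (p j) (p (j+1)))⁻¹ = (Rn : ℝ) := by
    rw [hRn, Nat.cast_sum]
    apply Finset.sum_congr rfl
    intro j hj
    rw [hCapp, if_pos (hadjp j (Finset.mem_range.1 hj))]
    exact inv_min_inv_inv (hdegpos _) (hdegpos _)
  have hmain : ∀ T, ∑ τ ∈ Finset.range T, ((mhQ G A) ^ τ) i i ≤ (Rn : ℝ) := by
    intro T
    rw [← hRval]
    exact partial_sum_bound C (mhMatrix G) (mhQ G A) A i hi hCsymm hCnn hCdiag hPoff hPdiag
      hQdef hQnn k p hp0 hpk hinj hCpos T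
  have hterm : ∀ τ : ℕ, prTraj (mhMatrix G) (dirac i) τ
      {x | x (Fin.last τ) = i ∧ ∀ s : Fin (τ + 1), 1 ≤ s.val → x s ∈ A}
      = ((mhQ G A) ^ τ) i i := fun τ => prTraj_eq_pow G A i hi τ
  have htnn : ∀ τ : ℕ, 0 ≤ ((mhQ G A) ^ τ) i i := fun τ => pow_entry_nonneg _ hQnn τ i i
  have hcard : 0 < A.card := Finset.card_pos.2 ⟨i, hi⟩
  calc (∑' τ : ℕ, ENNReal.ofReal (prTraj (mhMatrix G) (dirac i) τ
        {x | x (Fin.last τ) = i ∧ ∀ s : Fin (τ + 1), 1 ≤ s.val → x s ∈ A}))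
      = ∑' τ : ℕ, ENNReal.ofReal (((mhQ G A) ^ τ) i i) :=
        tsum_congr fun τ => by rw [hterm τ]
    _ = ⨆ F : Finset ℕ, ∑ τ ∈ F, ENNReal.ofReal (((mhQ G A) ^ τ) i i) :=
        ENNReal.tsum_eq_iSup_sum
    _ ≤ ENNReal.ofReal (Rn : ℝ) := by
        refine iSup_le fun F => ?_
        rw [← ENNReal.ofReal_sum_of_nonneg (fun τ _ => htnn τ)]
        apply ENNReal.ofReal_le_ofReal
        have hFsub : F ⊆ Finset.range (F.sup id + 1) := by
          intro τ hτ
          rw [Finset.mem_range]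
          exact Nat.lt_succ_of_le (Finset.le_sup (f := id) hτ)
        calc ∑ τ ∈ F, ((mhQ G A) ^ τ) i i
            ≤ ∑ τ ∈ Finset.range (F.sup id + 1), ((mhQ G A) ^ τ) i i :=
              Finset.sum_le_sum_of_subset_of_nonneg hFsub (fun τ _ _ => htnn τ)
          _ ≤ (Rn : ℝ) := hmain _
    _ < ENNReal.ofReal (6 * (A.card : ℝ) + 2 * (G.maxDegree : ℝ)) := by
        have hpos : (0:ℝ) < 6 * (A.card : ℝ) + 2 * (G.maxDegree : ℝ) := by
          have h1 : (1:ℝ) ≤ (A.card : ℝ) := by exact_mod_cast hcard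
          have h2 : (0:ℝ) ≤ (G.maxDegree : ℝ) := by positivity
          linarith
        rw [ENNReal.ofReal_lt_ofReal_iff hpos]
        have hlt : Rn < 6 * A.card + 2 * G.maxDegree := by omega
        calc (Rn:ℝ) < ((6 * A.card + 2 * G.maxDegree : ℕ) : ℝ) := by exact_mod_cast hlt
          _ = 6 * (A.card : ℝ) + 2 * (G.maxDegree : ℝ) := by push_cast; ring
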